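/- Let V be a real vector space, I : V → V a linear map with I² = -id, and S : V × V → ℝ a symmetric bilinear form. Define the bilinear form R by R(x, y) = S(x, I y). If R is alternating (R(x, x) = 0 for all x), then R is of type (1,1) with respect to I, i.e. R(I x, I y) = R(x, y) for all x, y ∈ V. -/
import Mathlib


/-- If `I² = -id`, `S` is a symmetric bilinear form and `R(x,y) = S(x, Iy)` is
alternating, then `R` is of type `(1,1)` with respect to `I`:
`R(Ix, Iy) = R(x,y)` for all `x, y`. -/
theorem type_one_one_of_alternating
    (V : Type*) [AddCommGroup V] [Module ℝ V]
    (I : V →ₗ[ℝ] V) (hI : ∀ v : V, I (I v) = -v)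
    (S : V →ₗ[ℝ] V →ₗ[ℝ] ℝ) (hS : ∀ x y : V, S x y = S y x)
    (halt : ∀ x : V, S x (I x) = 0) :
    ∀ x y : V, S (I x) (I (I y)) = S x (I y) := by
  intro x y
  have hpol : S x (I y) + S y (I x) = 0 := by
    have h := halt (x + y)
    simp only [map_add, LinearMap.add_apply] at h
    rw [halt x, halt y] at h
    linarith
  rw [hI y]
  simp only [map_neg]
  have := hS (I x) y
  linarith
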